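/- Let r ≥ 2 and f : [-1,1] → ℝ be the even polynomial of degree at most 2r-2 determined by f(±1) = 0, f'(-1) = 2, f'(1) = -2, and f''(x) = -(4/γ)(1-x²)^{r-2} where γ = ∫_{-1}^1 (1-x²)^{r-2} dx. Then f(x) ≥ 1 - x² for all x ∈ [-1,1], with equality everywhere when r = 2. -/

import Mathlib

open Set intervalIntegral


lemma key_aux (n : ℕ) {x : ℝ} (hx1 : -1 ≤ x) (hx0 : x ≤ 0) :
    2 * ∫ t in (-1:ℝ)..x, (1 - t ^ 2) ^ n
      ≤ (x + 1) * ∫ t in (-1:ℝ)..1, (1 - t ^ 2) ^ n := by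
  have hcont : Continuous (fun t : ℝ => (1 - t ^ 2) ^ n) := by continuity
  have hint : ∀ a b : ℝ, IntervalIntegrable (fun t : ℝ => (1 - t ^ 2) ^ n) MeasureTheory.volume a b :=
    fun a b => hcont.intervalIntegrable a b
  have hmono : ∀ s t : ℝ, -1 ≤ s → s ≤ t → t ≤ 0 → (1 - s ^ 2) ^ n ≤ (1 - t ^ 2) ^ n := by
    intro s t hs hst ht
    exact pow_le_pow_left₀ (by nlinarith) (by nlinarith) n
  have hA : (∫ t in (-1:ℝ)..x, (1 - t ^ 2) ^ n) ≤ (x + 1) * (1 - x ^ 2) ^ n := by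
    calc (∫ t in (-1:ℝ)..x, (1 - t ^ 2) ^ n)
        ≤ ∫ _t in (-1:ℝ)..x, (1 - x ^ 2) ^ n :=
          integral_mono_on (by linarith) (hint _ _) intervalIntegrable_const
            (fun t ht => hmono t x ht.1 ht.2 hx0)
      _ = (x + 1) * (1 - x ^ 2) ^ n := by
          rw [integral_const, smul_eq_mul]; ring
  have hB : (-x) * (1 - x ^ 2) ^ n ≤ ∫ t in x..(0:ℝ), (1 - t ^ 2) ^ n := by
    calc (-x) * (1 - x ^ 2) ^ n
        = ∫ _t in x..(0:ℝ), (1 - x ^ 2) ^ n := by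
          rw [integral_const, smul_eq_mul]; ring
      _ ≤ ∫ t in x..(0:ℝ), (1 - t ^ 2) ^ n :=
          integral_mono_on hx0 intervalIntegrable_const (hint _ _)
            (fun t ht => hmono x t hx1 ht.1 ht.2)
  have heven : (∫ t in (0:ℝ)..1, (1 - t ^ 2) ^ n) = ∫ t in (-1:ℝ)..0, (1 - t ^ 2) ^ n := by
    have h1 := integral_comp_neg (a := (0:ℝ)) (b := 1) (f := fun t => (1 - t ^ 2) ^ n)
    simpa [neg_sq] using h1
  have hsplit : (∫ t in (-1:ℝ)..0, (1 - t ^ 2) ^ n) + ∫ t in (0:ℝ)..1, (1 - t ^ 2) ^ n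
      = ∫ t in (-1:ℝ)..1, (1 - t ^ 2) ^ n :=
    integral_add_adjacent_intervals (hint _ _) (hint _ _)
  have hsplit2 : (∫ t in (-1:ℝ)..x, (1 - t ^ 2) ^ n) + ∫ t in x..(0:ℝ), (1 - t ^ 2) ^ n
      = ∫ t in (-1:ℝ)..0, (1 - t ^ 2) ^ n :=
    integral_add_adjacent_intervals (hint _ _) (hint _ _)
  nlinarith [mul_le_mul_of_nonneg_left hA (neg_nonneg.2 hx0),
    mul_le_mul_of_nonneg_left hB (by linarith : (0:ℝ) ≤ x + 1)]

/-- Let `r ≥ 2` and let `f` be the (even, degree `≤ 2r-2`) function determined by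
`f(±1) = 0`, `f'(-1) = 2`, `f'(1) = -2` and `f'' = -(4/γ)(1-x²)^{r-2}` with
`γ = ∫_{-1}^1 (1-x²)^{r-2} dx`. Then `f(x) ≥ 1 - x²` on `[-1,1]`, with equality
everywhere when `r = 2`. -/
theorem stmt_16 (r : ℕ) (hr : 2 ≤ r) (f : ℝ → ℝ) (hf : ContDiff ℝ (2 : ℕ∞) f)
    (hγ : (0 : ℝ) < ∫ x in (-1 : ℝ)..1, (1 - x ^ 2) ^ (r - 2))
    (hf0 : f (-1) = 0) (hf1 : f 1 = 0)
    (hf0' : deriv f (-1) = 2) (hf1' : deriv f 1 = -2)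
    (hf'' : ∀ x : ℝ, deriv (deriv f) x
      = -(4 / (∫ y in (-1 : ℝ)..1, (1 - y ^ 2) ^ (r - 2))) * (1 - x ^ 2) ^ (r - 2)) :
    (∀ x ∈ Icc (-1 : ℝ) 1, 1 - x ^ 2 ≤ f x) ∧
      (r = 2 → ∀ x ∈ Icc (-1 : ℝ) 1, f x = 1 - x ^ 2) := by
  set n := r - 2 with hn
  set γ : ℝ := ∫ y in (-1 : ℝ)..1, (1 - y ^ 2) ^ n with hγdef
  have hcont : Continuous (fun t : ℝ => (1 - t ^ 2) ^ n) := by continuity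
  have hint : ∀ a b : ℝ, IntervalIntegrable (fun t : ℝ => (1 - t ^ 2) ^ n)
      MeasureTheory.volume a b := fun a b => hcont.intervalIntegrable a b
  -- differentiability facts
  have h2 : ContDiff ℝ ((1 : ℕ) + 1) f := by exact_mod_cast hf
  have hC1 : ContDiff ℝ (1 : ℕ) (deriv f) := (contDiff_succ_iff_deriv.mp h2).2.2
  have hDf : Differentiable ℝ f := h2.differentiable (by norm_num)
  have hDf' : Differentiable ℝ (deriv f) := hC1.differentiable (by norm_num)
  have hcont'' : Continuous (deriv (deriv f)) := by
    have : deriv (deriv f) = fun x : ℝ => -(4 / γ) * (1 - x ^ 2) ^ n := funext hf''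
    rw [this]; exact continuous_const.mul hcont
  -- derivative formula via FTC
  have hDeriv : ∀ x : ℝ, deriv f x = 2 - 4 / γ * ∫ t in (-1:ℝ)..x, (1 - t ^ 2) ^ n := by
    intro x
    have h1 : (∫ t in (-1:ℝ)..x, deriv (deriv f) t) = deriv f x - deriv f (-1) :=
      integral_deriv_eq_sub (fun t _ => hDf' t) (hcont''.intervalIntegrable _ _)
    have h2' : (∫ t in (-1:ℝ)..x, deriv (deriv f) t)
        = -(4 / γ) * ∫ t in (-1:ℝ)..x, (1 - t ^ 2) ^ n := by
      rw [show (fun t : ℝ => deriv (deriv f) t) = fun t : ℝ => -(4 / γ) * (1 - t ^ 2) ^ n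
        from funext hf'']
      exact integral_const_mul _ _
    rw [h2', hf0'] at h1
    linarith
  -- value formula via FTC
  have hVal : ∀ x : ℝ, f x = ∫ t in (-1:ℝ)..x, deriv f t := by
    intro x
    have h1 : (∫ t in (-1:ℝ)..x, deriv f t) = f x - f (-1) :=
      integral_deriv_eq_sub (fun t _ => hDf t) (hDf'.continuous.intervalIntegrable _ _)
    rw [hf0] at h1; linarith
  have hVal1 : ∀ x : ℝ, (∫ t in x..(1:ℝ), deriv f t) = - f x := by
    intro x
    have h1 : (∫ t in x..(1:ℝ), deriv f t) = f 1 - f x :=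
      integral_deriv_eq_sub (fun t _ => hDf t) (hDf'.continuous.intervalIntegrable _ _)
    rw [hf1] at h1; linarith
  -- lower bound for deriv f on [-1,0]
  have hg1 : ∀ x ∈ Icc (-1:ℝ) 0, -2 * x ≤ deriv f x := by
    intro x hx
    have hk := key_aux n hx.1 hx.2
    rw [hDeriv x]
    rw [div_mul_eq_mul_div, ← sub_nonneg]
    have : 4 * (∫ t in (-1:ℝ)..x, (1 - t ^ 2) ^ n) / γ ≤ 2 * (x + 1) := by
      rw [div_le_iff₀ hγ]; nlinarith
    linarith
  -- upper bound for deriv f on [0,1]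
  have hg2 : ∀ x ∈ Icc (0:ℝ) 1, deriv f x ≤ -2 * x := by
    intro x hx
    have hnx : -x ∈ Icc (-1:ℝ) 0 := ⟨by linarith [hx.2], by linarith [hx.1]⟩
    have hk := key_aux n hnx.1 hnx.2
    have hJ : (∫ t in x..(1:ℝ), (1 - t ^ 2) ^ n) = ∫ t in (-1:ℝ)..(-x), (1 - t ^ 2) ^ n := by
      have h1 := integral_comp_neg (a := x) (b := (1:ℝ)) (f := fun t => (1 - t ^ 2) ^ n)
      simpa [neg_sq] using h1
    have hsplit : (∫ t in (-1:ℝ)..x, (1 - t ^ 2) ^ n) + ∫ t in x..(1:ℝ), (1 - t ^ 2) ^ n = γ :=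
      integral_add_adjacent_intervals (hint _ _) (hint _ _)
    rw [hDeriv x]
    have hkey : 4 * (∫ t in x..(1:ℝ), (1 - t ^ 2) ^ n) / γ ≤ 2 * (1 - x) := by
      rw [div_le_iff₀ hγ]; rw [hJ]; nlinarith
    have hI : (∫ t in (-1:ℝ)..x, (1 - t ^ 2) ^ n) = γ - ∫ t in x..(1:ℝ), (1 - t ^ 2) ^ n := by
      linarith
    rw [hI]
    have h4 : 4 / γ * (γ - ∫ t in x..(1:ℝ), (1 - t ^ 2) ^ n)
        = 4 - 4 * (∫ t in x..(1:ℝ), (1 - t ^ 2) ^ n) / γ := by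
      field_simp
    rw [h4]; linarith
  constructor
  · intro x hx
    rcases le_total x 0 with hx0 | hx0
    · have hpoly : (∫ t in (-1:ℝ)..x, (-2 * t)) = 1 - x ^ 2 := by
        rw [integral_const_mul, integral_id]; ring
      have hmono : (∫ t in (-1:ℝ)..x, (-2 * t)) ≤ ∫ t in (-1:ℝ)..x, deriv f t :=
        integral_mono_on hx.1
          ((continuous_const.mul continuous_id).intervalIntegrable _ _)
          (hDf'.continuous.intervalIntegrable _ _)
          (fun t ht => hg1 t ⟨ht.1, le_trans ht.2 hx0⟩)
      rw [← hVal x, hpoly] at hmono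
      exact hmono
    · have hpoly : (∫ t in x..(1:ℝ), (-2 * t)) = x ^ 2 - 1 := by
        rw [integral_const_mul, integral_id]; ring
      have hmono : (∫ t in x..(1:ℝ), deriv f t) ≤ ∫ t in x..(1:ℝ), (-2 * t) :=
        integral_mono_on hx.2
          (hDf'.continuous.intervalIntegrable _ _)
          ((continuous_const.mul continuous_id).intervalIntegrable _ _)
          (fun t ht => hg2 t ⟨le_trans hx0 ht.1, ht.2⟩)
      rw [hVal1 x, hpoly] at hmono
      linarith
  · intro hr2 x _
    have hn0 : n = 0 := by omega
    have hγ2 : γ = 2 := by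
      rw [hγdef, hn0]
      norm_num
    have hD : ∀ y : ℝ, deriv f y = -2 * y := by
      intro y
      rw [hDeriv y, hn0, hγ2]
      simp
      ring
    rw [hVal x]
    have : (∫ t in (-1:ℝ)..x, deriv f t) = ∫ t in (-1:ℝ)..x, (-2 * t) := by
      apply integral_congr
      intro t _
      exact hD t
    rw [this, integral_const_mul, integral_id]; ring
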